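/- There exist constants A' > 0 and B such that for all N and j: if the stable configuration π(N) of KSPM(3) has prefix (2,0)^j (i.e. π(N)_{2i} = 2 and π(N)_{2i+1} = 0 for 0 ≤ i ≤ j−1), then N > A'·4^j + B. -/

import Mathlib

/-- Effect of firing column `i` in KSPM(D), on height-difference configurations. -/
def step (D : ℕ) (σ : ℕ → ℕ) (i : ℕ) : ℕ → ℕ :=
  fun j =>
    if j = i then σ i - D
    else if j + 1 = i then σ j + (D - 1)
    else if j = i + D - 1 then σ j + 1
    else σ j

/-- Transition on column `i`: `σ →ᵢ σ'`. -/
def KTrans (D : ℕ) (σ : ℕ → ℕ) (i : ℕ) (σ' : ℕ → ℕ) : Prop :=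
  D ≤ σ i ∧ σ' = step D σ i

/-- A strategy (list of fired columns) is legal from `σ`. -/
def Legal (D : ℕ) : (ℕ → ℕ) → List ℕ → Prop
  | _, [] => True
  | σ, i :: s => D ≤ σ i ∧ Legal D (step D σ i) s

/-- Configuration obtained by applying a strategy. -/
def applyStrat (D : ℕ) : (ℕ → ℕ) → List ℕ → (ℕ → ℕ)
  | σ, [] => σ
  | σ, i :: s => applyStrat D (step D σ i) s

/-- Reachability `σ →* σ'`. -/
def Reaches (D : ℕ) (σ σ' : ℕ → ℕ) : Prop :=
  ∃ s : List ℕ, Legal D σ s ∧ applyStrat D σ s = σ'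

/-- A configuration is stable (a fixed point) if no transition is possible. -/
def Stable (D : ℕ) (σ : ℕ → ℕ) : Prop := ∀ i, σ i < D

/-- Initial configuration: `N` grains stacked on column 0 (height differences `(N,0,0,…)`). -/
def initConf (N : ℕ) : ℕ → ℕ := fun j => if j = 0 then N else 0

/-- `τ = π(N)`: the stable configuration reachable from `N` stacked grains. -/
def IsPi (D N : ℕ) (τ : ℕ → ℕ) : Prop := Reaches D (initConf N) τ ∧ Stable D τ

/-- `σ^{↓0}`: add one grain on column 0. -/
def addGrain (σ : ℕ → ℕ) : ℕ → ℕ := Function.update σ 0 (σ 0 + 1)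

/-- `s` is the leftmost (lexicographically minimal) strategy from `τ^{↓0}` to `τ'`. -/
def IsAvalancheFor (D : ℕ) (τ τ' : ℕ → ℕ) (s : List ℕ) : Prop :=
  Legal D (addGrain τ) s ∧ applyStrat D (addGrain τ) s = τ' ∧
    ∀ s' : List ℕ, Legal D (addGrain τ) s' → applyStrat D (addGrain τ) s' = τ' →
      ¬ List.Lex (· < ·) s' s

/-- `s` is the `k`-th avalanche: leftmost strategy from `π(k-1)^{↓0}` to `π(k)`. -/
def IsAvalanche (D k : ℕ) (s : List ℕ) : Prop :=
  ∃ τ τ' : ℕ → ℕ, IsPi D (k - 1) τ ∧ IsPi D k τ' ∧ IsAvalancheFor D τ τ' s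

/-- Position `t` (0-indexed) of strategy `s` is a peak: it exceeds all earlier fired columns. -/
def IsPeak (s : List ℕ) (t : ℕ) : Prop :=
  t < s.length ∧ ∀ t' < t, s.getD t' 0 < s.getD t 0

/-- Column `p` is a peak of `s`. -/
def IsPeakVal (s : List ℕ) (p : ℕ) : Prop :=
  ∃ t : ℕ, IsPeak s t ∧ s.getD t 0 = p

lemma step_cast (σ : ℕ → ℕ) (i j : ℕ) (hi : 3 ≤ σ i) :
    (step 3 σ i j : ℤ) = (σ j : ℤ) - 3*(if j = i then 1 else 0)
      + 2*(if j + 1 = i then 1 else 0) + (if j = i + 2 then 1 else 0) := by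
  unfold step
  split_ifs <;> simp_all <;> omega

lemma conserve (s : List ℕ) : ∀ (σ : ℕ → ℕ), Legal 3 σ s → ∀ j,
    (applyStrat 3 σ s j : ℤ) + 3 * s.count j
      = (σ j : ℤ) + 2 * s.count (j+1) + (if 2 ≤ j then (s.count (j-2) : ℤ) else 0) := by
  induction s with
  | nil => intro σ _ j; simp [applyStrat]
  | cons i t ih =>
    intro σ hleg j
    obtain ⟨hi, hleg'⟩ := hleg
    have h := ih (step 3 σ i) hleg' j
    have hs := step_cast σ i j hi
    rw [hs] at h
    show (applyStrat 3 (step 3 σ i) t j : ℤ) + 3 * ((i :: t).count j) = _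
    push_cast [List.count_cons] at h ⊢
    simp only [beq_iff_eq] at h ⊢
    split_ifs at h ⊢ <;> omega

open Finset in
lemma sum_ind (M i : ℕ) (h : i < M) : ∑ j ∈ range M, (if j = i then (1:ℤ) else 0) = 1 := by
  rw [Finset.sum_ite_eq' (range M) i (fun _ => (1:ℤ))]
  simp [h]

open Finset in
lemma sum_step (σ : ℕ → ℕ) (i M : ℕ) (hi : 3 ≤ σ i) (hM : i + 3 ≤ M) :
    (∑ j ∈ range M, (step 3 σ i j : ℤ)) + (if i = 0 then 2 else 0)
      = ∑ j ∈ range M, (σ j : ℤ) := by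
  have e1 : ∑ j ∈ range M, (step 3 σ i j : ℤ)
      = ∑ j ∈ range M, ((σ j : ℤ) - 3*(if j = i then 1 else 0)
        + 2*(if j + 1 = i then 1 else 0) + (if j = i + 2 then 1 else 0)) :=
    Finset.sum_congr rfl fun j _ => step_cast σ i j hi
  have e2 : ∑ j ∈ range M, (if j + 1 = i then (1:ℤ) else 0) = if i = 0 then 0 else 1 := by
    rcases i with _ | k
    · simp
    · have : ∀ j, ((j + 1 = k + 1) = (j = k)) := by intro j; simp
      simp only [this]
      rw [sum_ind M k (by omega)]
      simp
  rw [e1]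
  rw [Finset.sum_add_distrib, Finset.sum_add_distrib, Finset.sum_sub_distrib,
    ← Finset.mul_sum, ← Finset.mul_sum, sum_ind M i (by omega), sum_ind M (i+2) (by omega), e2]
  split_ifs <;> ring

open Finset in
lemma pot (s : List ℕ) : ∀ (σ : ℕ → ℕ) (M : ℕ), Legal 3 σ s → (∀ x ∈ s, x + 3 ≤ M) →
    (∑ j ∈ range M, (applyStrat 3 σ s j : ℤ)) + 2 * s.count 0 ≤ ∑ j ∈ range M, (σ j : ℤ) := by
  induction s with
  | nil => intro σ M _ _; simp [applyStrat]
  | cons i t ih =>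
    intro σ M hleg hM
    obtain ⟨hi, hleg'⟩ := hleg
    have h := ih (step 3 σ i) M hleg' (fun x hx => hM x (List.mem_cons_of_mem i hx))
    have hss := sum_step σ i M hi (hM i (List.mem_cons_self (a := i) (l := t)))
    show (∑ j ∈ range M, (applyStrat 3 (step 3 σ i) t j : ℤ)) + 2 * ((i :: t).count 0) ≤ _
    push_cast [List.count_cons] at h ⊢
    simp only [beq_iff_eq] at h ⊢
    split_ifs at hss ⊢ <;> omega

open Finset

/-- There are constants A' > 0 and B such that whenever π(N) in KSPM(3) has prefix
(2,0)^j, one has N > A'·4^j + B. -/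
theorem prefix_forces_many_grains :
    ∃ A' B : ℝ, 0 < A' ∧
      ∀ (N j : ℕ) (τ : ℕ → ℕ), IsPi 3 N τ →
        (∀ i : ℕ, i < j → τ (2 * i) = 2 ∧ τ (2 * i + 1) = 0) →
        A' * 4 ^ j + B < (N : ℝ) := by
  refine ⟨2/9, -1, by norm_num, ?_⟩
  intro N j τ hpi hpref
  obtain ⟨⟨s, hleg, happ⟩, _⟩ := hpi
  -- the key integer inequality
  have key : 2 * (4:ℤ)^j ≤ 9 * N + 4 := by
    set M : ℕ := 3 + s.sum with hM
    have hmem : ∀ x ∈ s, x + 3 ≤ M := by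
      intro x hx
      have : x ≤ s.sum := List.le_sum_of_mem hx
      omega
    -- bound on count 0
    have hcount : 2 * (s.count 0 : ℤ) ≤ N := by
      have h := pot s (initConf N) M hleg hmem
      rw [happ] at h
      have h1 : ∑ k ∈ range M, (initConf N k : ℤ) = N := by
        simp only [initConf]
        push_cast
        rw [Finset.sum_ite_eq' (range M) 0 (fun _ => (N:ℤ))]
        simp [hM]
      have h2 : 0 ≤ ∑ k ∈ range M, (τ k : ℤ) :=
        Finset.sum_nonneg fun k _ => by positivity
      omega
    -- shot vector with offset 2
    set A : ℕ → ℤ := fun n => if n = 0 then (N:ℤ) else if n = 1 then 0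
      else (s.count (n - 2) : ℤ) with hA
    have hAeval : ∀ m, A (m + 2) = (s.count m : ℤ) := by
      intro m
      have e : m + 2 - 2 = m := by omega
      simp only [hA]
      rw [if_neg (by omega : ¬ m + 2 = 0), if_neg (by omega : ¬ m + 2 = 1), e]
    have hA0 : A 0 = (N : ℤ) := by simp [hA]
    have hA1 : A 1 = 0 := by simp [hA]
    have rel : ∀ k, (τ k : ℤ) + 3 * A (k+2) = 2 * A (k+3) + A k := by
      intro k
      have h := conserve s (initConf N) hleg k
      rw [happ] at h
      have e : k + 3 = (k + 1) + 2 := by omega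
      rw [hAeval k, e, hAeval (k+1)]
      rcases k with _ | _ | k
      · rw [hA0]
        norm_num [initConf] at h ⊢
        omega
      · rw [hA1]
        norm_num [initConf] at h ⊢
        omega
      · rw [hAeval k]
        have e2 : k + 2 - 2 = k := by omega
        simp only [initConf, if_neg (by omega : ¬ k + 2 = 0),
          if_pos (by omega : (2:ℕ) ≤ k + 2), e2] at h
        omega
    set q : ℕ → ℤ := fun i => A (2*i) - 2*A (2*i+1) + A (2*i+2) with hq
    have keyrec : ∀ i, i < j → 4 * q (i+1) = q i - 2 := by
      intro i hij
      have r1 := rel (2*i)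
      have r2 := rel (2*i+1)
      obtain ⟨h2', h0⟩ := hpref i hij
      rw [h2'] at r1
      rw [h0] at r2
      simp only [hq]
      have e1 : 2*(i+1) = 2*i+2 := by ring
      have e2 : 2*(i+1)+1 = 2*i+3 := by ring
      have e3 : 2*(i+1)+2 = 2*i+4 := by ring
      rw [e1]
      have f1 : 2*i+2+1 = 2*i+3 := by omega
      have f2 : 2*i+2+2 = 2*i+4 := by omega
      rw [f1, f2]
      have e4 : 2*i+1+2 = 2*i+3 := by omega
      have e5 : 2*i+1+3 = 2*i+4 := by omega
      rw [e4, e5] at r2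
      push_cast at r1 r2
      linarith
    have geo : ∀ i, i ≤ j → (4:ℤ)^i * (3 * q i + 2) = 3 * q 0 + 2 := by
      intro i
      induction i with
      | zero => intro _; norm_num
      | succ n ihn =>
        intro h
        have hn := ihn (by omega)
        have hk := keyrec n (by omega)
        calc (4:ℤ)^(n+1) * (3*q (n+1) + 2) = 4^n * (3*(4 * q (n+1)) + 8) := by ring
          _ = 4^n * (3*(q n - 2) + 8) := by rw [hk]
          _ = 4^n * (3*q n + 2) := by ring
          _ = 3*q 0 + 2 := hn
    have hgeo := geo j le_rfl
    have hq0 : q 0 = N + s.count 0 := by simp [hq, hA]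
    have h4 : (0:ℤ) < 4^j := by positivity
    have hm : 3 * q j + 2 ≥ 1 ∨ 3 * q j + 2 ≤ -1 := by omega
    have hle : (4:ℤ)^j ≤ 3 * q 0 + 2 := by
      rcases hm with hm | hm
      · calc (4:ℤ)^j = 4^j * 1 := by ring
          _ ≤ 4^j * (3 * q j + 2) := by
            exact mul_le_mul_of_nonneg_left hm h4.le
          _ = 3 * q 0 + 2 := hgeo
      · exfalso
        have hneg : 4^j * (3 * q j + 2) ≤ 4^j * (-1) := mul_le_mul_of_nonneg_left hm h4.le
        rw [hgeo] at hneg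
        have : (0:ℤ) ≤ s.count 0 := by positivity
        have : (0:ℤ) ≤ N := by positivity
        omega
    rw [hq0] at hle
    omega
  -- transfer to ℝ
  have keyR : (2:ℝ) * 4^j ≤ 9 * N + 4 := by exact_mod_cast key
  linarith
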